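/- Let E, Q, R be real n×n matrices with EᵀQ = QᵀE, Q symmetric, and R = Rᵀ positive semidefinite, let B be a real n×m matrix and u : ℝ → ℝᵐ continuous, let ε ≥ 0, and set E_ε = E + εI and H_ε(ξ) = ½ ξᵀ Qᵀ E_ε ξ. If v : ℝ → ℝⁿ is continuously differentiable with E_ε v'(t) = −R Q v(t) + B u(t) for all t, and y_v(t) = Bᵀ Q v(t), then for all h ≥ 0: H_ε(v(h)) − H_ε(v(0)) ≤ ∫_0^h y_v(s)ᵀ u(s) ds. -/

import Mathlib

open Matrix

lemma my_hasDerivAt_dot {n : ℕ} (A : Matrix (Fin n) (Fin n) ℝ)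
    {x y : ℝ → Fin n → ℝ} {x' y' : Fin n → ℝ} {t : ℝ}
    (hx : HasDerivAt x x' t) (hy : HasDerivAt y y' t) :
    HasDerivAt (fun s => x s ⬝ᵥ A.mulVec (y s))
      (x' ⬝ᵥ A.mulVec (y t) + x t ⬝ᵥ A.mulVec y') t := by
  have hxi : ∀ i, HasDerivAt (fun s => x s i) (x' i) t := fun i =>
    (ContinuousLinearMap.proj (R := ℝ) (φ := fun _ : Fin n => ℝ) i).hasFDerivAt.comp_hasDerivAt t hx
  have hyi : ∀ j, HasDerivAt (fun s => y s j) (y' j) t := fun j =>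
    (ContinuousLinearMap.proj (R := ℝ) (φ := fun _ : Fin n => ℝ) j).hasFDerivAt.comp_hasDerivAt t hy
  have main : HasDerivAt (fun s => ∑ i, ∑ j, x s i * (A i j * y s j))
      (∑ i, ∑ j, (x' i * (A i j * y t j) + x t i * (A i j * y' j))) t := by
    apply HasDerivAt.fun_sum; intro i _
    apply HasDerivAt.fun_sum; intro j _
    exact (hxi i).mul ((hyi j).const_mul (A i j))
  have h2 : (fun s => x s ⬝ᵥ A.mulVec (y s)) = fun s => ∑ i, ∑ j, x s i * (A i j * y s j) := by
    funext s; simp [dotProduct, Matrix.mulVec, Finset.mul_sum]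
  have h3 : x' ⬝ᵥ A.mulVec (y t) + x t ⬝ᵥ A.mulVec y'
      = ∑ i, ∑ j, (x' i * (A i j * y t j) + x t i * (A i j * y' j)) := by
    simp [dotProduct, Matrix.mulVec, Finset.mul_sum, Finset.sum_add_distrib]
  rw [h2, h3]; exact main

lemma my_dot_symm {n : ℕ} {A : Matrix (Fin n) (Fin n) ℝ} (hA : Aᵀ = A)
    (x y : Fin n → ℝ) : x ⬝ᵥ A.mulVec y = y ⬝ᵥ A.mulVec x := by
  nth_rewrite 2 [← hA]
  conv_rhs => rw [Matrix.dotProduct_mulVec, Matrix.vecMul_transpose]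
  exact dotProduct_comm _ _

lemma my_contDot {n : ℕ} (A : Matrix (Fin n) (Fin n) ℝ) {x y : ℝ → Fin n → ℝ}
    (hx : Continuous x) (hy : Continuous y) :
    Continuous fun t => x t ⬝ᵥ A.mulVec (y t) := by
  simp only [dotProduct, Matrix.mulVec]
  fun_prop

/-- The dissipative split subsystem `E_ε v' = -R Q v + B u` (with `E_ε = E + εI`,
`EᵀQ = QᵀE`, `Q` symmetric, `R` symmetric positive semidefinite) satisfies the
dissipativity inequality for the perturbed Hamiltonian `H_ε(ξ) = ½ ξᵀ Qᵀ E_ε ξ`: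
`H_ε(v(h)) - H_ε(v(0)) ≤ ∫_0^h y_v(s)ᵀ u(s) ds` for `h ≥ 0`. -/
theorem phs_dissipative_subsystem_dissipativity {n m : ℕ}
    (E Q R : Matrix (Fin n) (Fin n) ℝ) (B : Matrix (Fin n) (Fin m) ℝ)
    (hEQ : Eᵀ * Q = Qᵀ * E) (hQsym : Qᵀ = Q) (hRsym : Rᵀ = R)
    (hRpsd : ∀ v : Fin n → ℝ, 0 ≤ v ⬝ᵥ R.mulVec v)
    (u : ℝ → Fin m → ℝ) (hu : Continuous u)
    (ε : ℝ) (hε : 0 ≤ ε)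
    (Eε : Matrix (Fin n) (Fin n) ℝ) (hEε : Eε = E + ε • (1 : Matrix (Fin n) (Fin n) ℝ))
    (Hε : (Fin n → ℝ) → ℝ)
    (hHε : Hε = fun ξ => (1 / 2 : ℝ) * (ξ ⬝ᵥ (Qᵀ * Eε).mulVec ξ))
    (v v' : ℝ → Fin n → ℝ)
    (hv : ∀ t : ℝ, HasDerivAt v (v' t) t) (hv' : Continuous v')
    (hsys : ∀ t : ℝ, Eε.mulVec (v' t) = -(R.mulVec (Q.mulVec (v t))) + B.mulVec (u t))
    (yv : ℝ → Fin m → ℝ)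
    (hy : yv = fun t => Bᵀ.mulVec (Q.mulVec (v t))) :
    ∀ h : ℝ, 0 ≤ h →
      Hε (v h) - Hε (v 0) ≤ ∫ s in (0 : ℝ)..h, yv s ⬝ᵥ u s := by

  intro h hh
  have hvc : Continuous v := continuous_iff_continuousAt.2 fun t => (hv t).continuousAt
  set A : Matrix (Fin n) (Fin n) ℝ := Qᵀ * Eε with hA
  have hAsym : Aᵀ = A := by
    rw [hA, Matrix.transpose_mul, Matrix.transpose_transpose, hEε,
      Matrix.transpose_add, Matrix.transpose_smul, Matrix.transpose_one,
      Matrix.add_mul, Matrix.mul_add, hEQ, hQsym]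
    simp [Matrix.smul_mul, Matrix.mul_smul]
  set d : ℝ → ℝ := fun t => v' t ⬝ᵥ A.mulVec (v t) with hd
  have hg : ∀ t, HasDerivAt (fun s => Hε (v s)) (d t) t := by
    intro t
    have h1 := (my_hasDerivAt_dot A (hv t) (hv t)).const_mul (1 / 2 : ℝ)
    have h2 : (fun s => Hε (v s)) = fun s => (1 / 2 : ℝ) * (v s ⬝ᵥ A.mulVec (v s)) := by
      funext s; rw [hHε]
    rw [h2]
    have h3 : d t = (1 / 2 : ℝ) * (v' t ⬝ᵥ A.mulVec (v t) + v t ⬝ᵥ A.mulVec (v' t)) := by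
      rw [my_dot_symm hAsym (v t) (v' t), hd]; ring
    rw [h3]; exact h1
  have key : ∀ s : ℝ, d s ≤ yv s ⬝ᵥ u s := by
    intro s
    have hA2 : A = Eεᵀ * Q := by
      rw [hA, hEε, Matrix.transpose_add, Matrix.transpose_smul, Matrix.transpose_one,
        Matrix.add_mul, Matrix.mul_add, hEQ, hQsym]
      simp [Matrix.smul_mul, Matrix.mul_smul]
    have e1 : d s = Eε.mulVec (v' s) ⬝ᵥ Q.mulVec (v s) := by
      show v' s ⬝ᵥ A.mulVec (v s) = _
      rw [hA2, ← Matrix.mulVec_mulVec, Matrix.dotProduct_mulVec, Matrix.vecMul_transpose]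
    rw [e1, hsys s, add_dotProduct, neg_dotProduct]
    have e2 : R.mulVec (Q.mulVec (v s)) ⬝ᵥ Q.mulVec (v s)
        = Q.mulVec (v s) ⬝ᵥ R.mulVec (Q.mulVec (v s)) := dotProduct_comm _ _
    have e3 : B.mulVec (u s) ⬝ᵥ Q.mulVec (v s) = yv s ⬝ᵥ u s := by
      rw [hy, dotProduct_comm, Matrix.dotProduct_mulVec, ← Matrix.mulVec_transpose]
    rw [e2, e3]
    have := hRpsd (Q.mulVec (v s))
    linarith
  have hdc : Continuous d := my_contDot A hv' hvc
  have hyuc : Continuous fun s => yv s ⬝ᵥ u s := by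
    rw [hy]
    simp only [dotProduct, Matrix.mulVec]
    fun_prop
  have hcalc : (∫ s in (0:ℝ)..h, d s) = Hε (v h) - Hε (v 0) :=
    intervalIntegral.integral_eq_sub_of_hasDerivAt (fun t _ => hg t)
      (hdc.intervalIntegrable 0 h)
  rw [← hcalc]
  exact intervalIntegral.integral_mono_on hh (hdc.intervalIntegrable 0 h)
    (hyuc.intervalIntegrable 0 h) (fun s _ => key s)
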